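/- The k-numerical range W_k(A) is a singleton {ξ} if and only if A = (ξ/k) I. -/

import Mathlib

open Matrix

/-- `P` is an orthogonal projection of rank `k`. -/
def IsProjOfRank {m : Type*} [Fintype m] [DecidableEq m]
    (P : Matrix m m ℂ) (k : ℕ) : Prop :=
  P * P = P ∧ Pᴴ = P ∧ P.rank = k

/-- The `k`-numerical range `W_k(A) = { tr (A P) : P an orthogonal projection of rank k }`. -/
def WK {m : Type*} [Fintype m] [DecidableEq m] (k : ℕ) (A : Matrix m m ℂ) : Set ℂ :=
  {z | ∃ P : Matrix m m ℂ, IsProjOfRank P k ∧ z = (A * P).trace}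

/-- The `k`-numerical radius `w_k(A) = max { |tr (A P)| : P a rank-k orthogonal projection }`. -/
noncomputable def wk {m : Type*} [Fintype m] [DecidableEq m] (k : ℕ) (A : Matrix m m ℂ) : ℝ :=
  sSup {r : ℝ | ∃ P : Matrix m m ℂ, IsProjOfRank P k ∧ r = ‖(A * P).trace‖}

/-- `A` and `B` are parallel with respect to the `k`-numerical radius. -/
noncomputable def ParallelWk {m : Type*} [Fintype m] [DecidableEq m]
    (k : ℕ) (A B : Matrix m m ℂ) : Prop :=
  ∃ μ : ℂ, ‖μ‖ = 1 ∧ wk k (A + μ • B) = wk k A + wk k B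

/-- Sum of the `k` largest eigenvalues of a Hermitian matrix (`0` if not Hermitian). -/
noncomputable def sumKLargest {m : Type*} [Fintype m] [DecidableEq m]
    (k : ℕ) (A : Matrix m m ℂ) : ℝ :=
  if h : A.IsHermitian then
    sSup {r : ℝ | ∃ s : Finset m, s.card = k ∧ r = ∑ i ∈ s, h.eigenvalues i}
  else 0

/-- Sum of the `k` smallest eigenvalues of a Hermitian matrix (`0` if not Hermitian). -/
noncomputable def sumKSmallest {m : Type*} [Fintype m] [DecidableEq m]
    (k : ℕ) (A : Matrix m m ℂ) : ℝ :=
  if h : A.IsHermitian then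
    sInf {r : ℝ | ∃ s : Finset m, s.card = k ∧ r = ∑ i ∈ s, h.eigenvalues i}
  else 0

section Helpers
variable {m : Type*} [Fintype m] [DecidableEq m]


lemma eig01 {m : Type*} [Fintype m] [DecidableEq m] (P : Matrix m m ℂ)
    (hP : P * P = P) (hH : P.IsHermitian) (i : m) :
    hH.eigenvalues i = 0 ∨ hH.eigenvalues i = 1 := by
  have hv := hH.mulVec_eigenvectorBasis i
  have h2 : P *ᵥ (P *ᵥ ⇑(hH.eigenvectorBasis i)) = (hH.eigenvalues i * hH.eigenvalues i) • ⇑(hH.eigenvectorBasis i) := by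
    rw [hv, mulVec_smul, hv, smul_smul]
  rw [mulVec_mulVec, hP, hv] at h2
  have hvne : ⇑(hH.eigenvectorBasis i) ≠ 0 := by
    have h1 := hH.eigenvectorBasis.orthonormal.1 i
    intro h
    rw [show hH.eigenvectorBasis i = 0 by ext j; exact congrFun h j] at h1
    simp at h1
  have h3 : (hH.eigenvalues i * hH.eigenvalues i - hH.eigenvalues i) • ⇑(hH.eigenvectorBasis i) = 0 := by
    rw [sub_smul, h2, sub_self]
  rcases smul_eq_zero.mp h3 with h | h
  · have : hH.eigenvalues i * (hH.eigenvalues i - 1) = 0 := by ring_nf; linarith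
    rcases mul_eq_zero.mp this with h | h
    · exact Or.inl h
    · exact Or.inr (by linarith)
  · exact absurd h hvne

lemma trace_eq_sum_eig {m : Type*} [Fintype m] [DecidableEq m] (P : Matrix m m ℂ)
    (hH : P.IsHermitian) : P.trace = ∑ i, (hH.eigenvalues i : ℂ) := by
  conv_lhs => rw [hH.spectral_theorem]
  rw [Unitary.conjStarAlgAut_apply, Matrix.trace_mul_comm, ← mul_assoc, show (star hH.eigenvectorUnitary : Matrix m m ℂ) * hH.eigenvectorUnitary = 1 by simpa using congrArg Subtype.val (Unitary.star_mul_self_of_mem hH.eigenvectorUnitary.2)]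
  simp [Matrix.trace, Matrix.diag]

lemma trace_eq_rank {m : Type*} [Fintype m] [DecidableEq m] (P : Matrix m m ℂ)
    (hP : P * P = P) (hH : P.IsHermitian) : P.trace = (P.rank : ℂ) := by
  rw [trace_eq_sum_eig P hH, hH.rank_eq_card_non_zero_eigs]
  rw [Fintype.card_subtype]
  classical
  rw [← Finset.sum_filter_add_sum_filter_not Finset.univ (fun i => hH.eigenvalues i ≠ 0)]
  have h1 : ∀ i ∈ Finset.univ.filter (fun i => hH.eigenvalues i ≠ 0), (hH.eigenvalues i : ℂ) = 1 := by
    intro i hi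
    simp only [Finset.mem_filter] at hi
    rcases eig01 P hP hH i with h | h
    · exact absurd h hi.2
    · rw [h]; norm_num
  have h2 : ∀ i ∈ Finset.univ.filter (fun i => ¬ hH.eigenvalues i ≠ 0), (hH.eigenvalues i : ℂ) = 0 := by
    intro i hi
    simp only [Finset.mem_filter, not_not] at hi
    rw [hi.2]; norm_num
  rw [Finset.sum_congr rfl h1, Finset.sum_congr rfl h2]
  simp

/-- Build a rank-k projection from idempotent + hermitian + trace = k. -/
lemma mkProj {m : Type*} [Fintype m] [DecidableEq m] (P : Matrix m m ℂ) (k : ℕ)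
    (hP : P * P = P) (hH : Pᴴ = P) (ht : P.trace = (k : ℂ)) : IsProjOfRank P k := by
  refine ⟨hP, hH, ?_⟩
  have := trace_eq_rank P hP hH
  rw [ht] at this
  exact_mod_cast this.symm

/-- Trace of a rank-k projection is k. -/
lemma proj_trace {m : Type*} [Fintype m] [DecidableEq m] {P : Matrix m m ℂ} {k : ℕ}
    (h : IsProjOfRank P k) : P.trace = (k : ℂ) := by
  rw [trace_eq_rank P h.1 h.2.1, h.2.2]

/-- Diagonal indicator projection. -/
lemma diagProj (S : Finset m) :
    IsProjOfRank (diagonal (fun i => if i ∈ S then (1:ℂ) else 0)) S.card := by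
  apply mkProj
  · rw [diagonal_mul_diagonal]
    refine congrArg diagonal (funext fun i => ?_)
    by_cases h : i ∈ S <;> simp [h, Pi.star_apply]
  · rw [diagonal_conjTranspose]
    refine congrArg diagonal (funext fun i => ?_)
    by_cases h : i ∈ S <;> simp [h, Pi.star_apply]
  · simp [Matrix.trace, Matrix.diag, Finset.sum_ite_mem]

lemma trace_mul_diagonal' (A : Matrix m m ℂ) (S : Finset m) :
    (A * diagonal (fun i => if i ∈ S then (1:ℂ) else 0)).trace = ∑ i ∈ S, A i i := by
  simp only [Matrix.trace, Matrix.diag, Matrix.mul_diagonal]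
  simp [Finset.sum_ite_mem]

/-- Projection onto span of T's basis vectors plus a unit vector supported off T. -/
lemma mixedProj (T : Finset m) (v : m → ℂ)
    (hv1 : ∑ a, v a * (starRingEnd ℂ) (v a) = 1) (hdisj : ∀ a ∈ T, v a = 0) :
    IsProjOfRank (diagonal (fun i => if i ∈ T then (1:ℂ) else 0) + vecMulVec v (star v)) (T.card + 1) := by
  set D := diagonal (fun i => if i ∈ T then (1:ℂ) else 0) with hD
  set V := vecMulVec v (star v) with hV
  have hd0 : ∀ a, (if a ∈ T then (1:ℂ) else 0) * v a = 0 := by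
    intro a
    by_cases h : a ∈ T
    · simp [h, hdisj a h]
    · simp [h]
  have hDV : D * V = 0 := by
    ext a b
    simp only [hD, hV, Matrix.diagonal_mul, vecMulVec_apply, Matrix.zero_apply, Pi.star_apply]
    rw [← mul_assoc, hd0 a, zero_mul]
  have hVD : V * D = 0 := by
    ext a b
    simp only [hD, hV, Matrix.mul_diagonal, vecMulVec_apply, Matrix.zero_apply, Pi.star_apply]
    have : (if b ∈ T then (1:ℂ) else 0) * v b = 0 := hd0 b
    by_cases h : b ∈ T
    · simp [h, hdisj b h]
    · simp [h]
  have hVV : V * V = V := by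
    ext a b
    simp only [hV, Matrix.mul_apply, vecMulVec_apply, Pi.star_apply]
    calc ∑ c, v a * star (v c) * (v c * star (v b))
        = v a * star (v b) * ∑ c, v c * (starRingEnd ℂ) (v c) := by
          rw [Finset.mul_sum]; congr 1; ext c; simp [RCLike.star_def]; ring
      _ = v a * star (v b) := by rw [hv1, mul_one]
  apply mkProj
  · rw [add_mul, mul_add, mul_add, hDV, hVD, hVV]
    have hDD : D * D = D := by
      rw [hD, diagonal_mul_diagonal]
      refine congrArg diagonal (funext fun i => ?_)
      by_cases h : i ∈ T <;> simp [h, Pi.star_apply]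
    rw [hDD]
    abel
  · rw [conjTranspose_add]
    congr 1
    · rw [hD, diagonal_conjTranspose]
      refine congrArg diagonal (funext fun i => ?_)
      by_cases h : i ∈ T <;> simp [h, Pi.star_apply]
    · ext a b
      simp [hV, vecMulVec_apply, RCLike.star_def, mul_comm]
  · rw [trace_add]
    have h1 : D.trace = (T.card : ℂ) := by
      simp [hD, Matrix.trace, Matrix.diag, Finset.sum_ite_mem]
    have h2 : V.trace = 1 := by
      simpa [hV, Matrix.trace, Matrix.diag, vecMulVec_apply, RCLike.star_def] using hv1
    rw [h1, h2]
    push_cast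
    ring


variable {m : Type*} [Fintype m] [DecidableEq m]

lemma trace_mul_vecMulVec (A : Matrix m m ℂ) (v : m → ℂ) :
    (A * vecMulVec v (star v)).trace = ∑ a, ∑ b, A a b * v b * (starRingEnd ℂ) (v a) := by
  simp only [Matrix.trace, Matrix.diag, Matrix.mul_apply, vecMulVec_apply, Pi.star_apply,
    RCLike.star_def]
  congr 1; ext a; congr 1; ext b; ring

lemma pair_sum {i j : m} (hij : i ≠ j) (f : m → ℂ) (α β : ℂ) :
    ∑ b, f b * (if b = i then α else if b = j then β else 0) = f i * α + f j * β := by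
  have h : ∀ b, f b * (if b = i then α else if b = j then β else 0)
      = (if b = i then f b * α else 0) + (if b = j then f b * β else 0) := by
    intro b
    by_cases hb : b = i
    · subst hb; simp [hij]
    · by_cases hb' : b = j <;> simp [hb, hb', Ne.symm hij]
  rw [Finset.sum_congr rfl (fun b _ => h b), Finset.sum_add_distrib]
  simp


end Helpers

theorem stmt_3 (n k : ℕ) (hk : 1 ≤ k) (hkn : k < n)
    (A : Matrix (Fin n) (Fin n) ℂ) (ξ : ℂ) :
    WK k A = {ξ} ↔ A = (ξ / (k : ℂ)) • (1 : Matrix (Fin n) (Fin n) ℂ) := by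
  have hk0 : (k : ℂ) ≠ 0 := Nat.cast_ne_zero.mpr (by omega)
  obtain ⟨S₀, -, hS₀⟩ := Finset.exists_subset_card_eq
    (s := (Finset.univ : Finset (Fin n))) (n := k) (by simp; omega)
  constructor
  · intro h
    have key : ∀ P : Matrix (Fin n) (Fin n) ℂ, IsProjOfRank P k → (A * P).trace = ξ := by
      intro P hP
      have hmem : (A * P).trace ∈ WK k A := ⟨P, hP, rfl⟩
      rw [h] at hmem; exact hmem
    have diag_sum : ∀ S : Finset (Fin n), S.card = k → ∑ i ∈ S, A i i = ξ := by
      intro S hS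
      have := key _ (hS ▸ diagProj S)
      rwa [trace_mul_diagonal'] at this
    have pairT : ∀ i j : Fin n, i ≠ j → ∃ T : Finset (Fin n),
        i ∉ T ∧ j ∉ T ∧ T.card = k - 1 := by
      intro i j hij
      have hcb : k - 1 ≤ (Finset.univ \ {i, j} : Finset (Fin n)).card := by
        rw [Finset.card_sdiff_of_subset (Finset.subset_univ _)]
        have h2 : ({i, j} : Finset (Fin n)).card = 2 := by
          rw [Finset.card_insert_of_notMem (by simp [hij]), Finset.card_singleton]
        rw [h2, Finset.card_univ, Fintype.card_fin]
        omega
      obtain ⟨T, hTsub, hTcard⟩ := Finset.exists_subset_card_eq hcb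
      refine ⟨T, fun hi => ?_, fun hj => ?_, hTcard⟩
      · have := hTsub hi
        simp at this
      · have := hTsub hj
        simp at this
    have main : ∀ i j : Fin n, i ≠ j → A i i = A j j ∧ A i j = 0 := by
      intro i j hij
      obtain ⟨T, hiT, hjT, hTcard⟩ := pairT i j hij
      have e1 : A i i + ∑ t ∈ T, A t t = ξ := by
        have hc : (insert i T).card = k := by
          rw [Finset.card_insert_of_notMem hiT, hTcard]; omega
        have := diag_sum _ hc
        rwa [Finset.sum_insert hiT] at this
      have e2 : A j j + ∑ t ∈ T, A t t = ξ := by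
        have hc : (insert j T).card = k := by
          rw [Finset.card_insert_of_notMem hjT, hTcard]; omega
        have := diag_sum _ hc
        rwa [Finset.sum_insert hjT] at this
      have hdd : A i i = A j j := by linear_combination e1 - e2
      have e3 : ∀ μ : ℂ, μ * (starRingEnd ℂ) μ = 1 →
          μ * A i j + (starRingEnd ℂ) μ * A j i = 0 := by
        intro μ hμ
        set c : ℂ := (((Real.sqrt 2)⁻¹ : ℝ) : ℂ) with hcdef
        have hc2 : c * (starRingEnd ℂ) c = 1 / 2 := by
          rw [hcdef, Complex.conj_ofReal]
          norm_cast
          rw [← mul_inv]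
          rw [Real.mul_self_sqrt (by norm_num)]
          norm_num
        set v : Fin n → ℂ := fun a => if a = i then c else if a = j then μ * c else 0 with hv
        have vi : v i = c := by simp [hv]
        have vj : v j = μ * c := by simp [hv, Ne.symm hij]
        have hv1 : ∑ a, v a * (starRingEnd ℂ) (v a) = 1 := by
          have hpt : ∀ a, v a * (starRingEnd ℂ) (v a)
              = (fun b => v b * (starRingEnd ℂ) (v b)) a * (if a = i then 1 else if a = j then 1 else 0) := by
            intro a
            by_cases ha : a = i
            · simp [ha]
            · by_cases ha' : a = j <;> simp [hv, ha, ha']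
          rw [Finset.sum_congr rfl (fun a _ => hpt a), pair_sum hij]
          simp only [vi, vj, mul_one, _root_.map_mul]
          calc c * (starRingEnd ℂ) c + μ * c * ((starRingEnd ℂ) μ * (starRingEnd ℂ) c)
              = c * (starRingEnd ℂ) c + (μ * (starRingEnd ℂ) μ) * (c * (starRingEnd ℂ) c) := by ring
            _ = 1 := by rw [hμ, hc2]; norm_num
        have hdisj : ∀ a ∈ T, v a = 0 := by
          intro a ha
          have hai : a ≠ i := fun h => hiT (h ▸ ha)
          have haj : a ≠ j := fun h => hjT (h ▸ ha)
          simp [hv, hai, haj]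
        have hproj := mixedProj T v hv1 hdisj
        have hcard : T.card + 1 = k := by omega
        rw [hcard] at hproj
        have htr := key _ hproj
        rw [Matrix.mul_add, trace_add, trace_mul_diagonal', trace_mul_vecMulVec] at htr
        have hsum : ∑ a, ∑ b, A a b * v b * (starRingEnd ℂ) (v a)
            = (A i i + A j j + μ * A i j + (starRingEnd ℂ) μ * A j i) / 2 := by
          have hinner : ∀ a, ∑ b, A a b * v b * (starRingEnd ℂ) (v a)
              = (A a i * c + A a j * (μ * c)) * (starRingEnd ℂ) (v a) := by
            intro a
            rw [← Finset.sum_mul]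
            congr 1
            exact pair_sum hij (fun b => A a b) c (μ * c)
          rw [Finset.sum_congr rfl (fun a _ => hinner a)]
          have houter : ∀ a, (A a i * c + A a j * (μ * c)) * (starRingEnd ℂ) (v a)
              = (fun a => A a i * c + A a j * (μ * c)) a
                * (if a = i then (starRingEnd ℂ) c else if a = j then (starRingEnd ℂ) (μ * c) else 0) := by
            intro a
            by_cases ha : a = i
            · simp [ha, vi]
            · by_cases ha' : a = j <;> simp [hv, ha, ha', Ne.symm hij, _root_.map_mul]
          rw [Finset.sum_congr rfl (fun a _ => houter a), pair_sum hij]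
          simp only [_root_.map_mul]
          linear_combination (A i i + μ * A i j + (starRingEnd ℂ) μ * A j i
            + A j j * (μ * (starRingEnd ℂ) μ)) * hc2 + A j j / 2 * hμ
        rw [hsum] at htr
        linear_combination 2 * htr - 2 * e1 + hdd
      refine ⟨hdd, ?_⟩
      have h1 := e3 1 (by simp)
      have h2 := e3 Complex.I (by simp [Complex.conj_I, Complex.I_mul_I])
      rw [_root_.map_one, one_mul] at h1
      rw [Complex.conj_I] at h2
      have hI : Complex.I * Complex.I = -1 := Complex.I_mul_I
      linear_combination h1/2 - Complex.I/2 * h2 + ((A i j - A j i)/2) * hI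
    have diag_eq : ∀ i j : Fin n, A i i = A j j := by
      intro i j
      by_cases hij : i = j
      · rw [hij]
      · exact (main i j hij).1
    have hdiag : ∀ i : Fin n, A i i = ξ / (k : ℂ) := by
      intro i
      have hcard1 : 1 < Fintype.card (Fin n) := by simp; omega
      obtain ⟨j, hij⟩ := Fintype.exists_ne_of_one_lt_card hcard1 i
      obtain ⟨T, hiT, hjT, hTcard⟩ := pairT i j (Ne.symm hij)
      have hc : (insert i T).card = k := by
        rw [Finset.card_insert_of_notMem hiT, hTcard]; omega
      have e1 := diag_sum _ hc
      rw [Finset.sum_insert hiT, Finset.sum_congr rfl (fun t _ => diag_eq t i),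
        Finset.sum_const, hTcard] at e1
      rw [eq_div_iff hk0]
      rw [nsmul_eq_mul, Nat.cast_sub hk] at e1
      push_cast at e1 ⊢
      linear_combination e1
    ext i j
    by_cases hij : i = j
    · subst hij
      simp [Matrix.smul_apply, Matrix.one_apply_eq, hdiag i, smul_eq_mul]
    · have hz := (main i j hij).2
      simp [Matrix.smul_apply, Matrix.one_apply_ne hij, hz, smul_eq_mul]
  · intro h
    subst h
    ext z
    simp only [Set.mem_singleton_iff, WK, Set.mem_setOf_eq]
    constructor
    · rintro ⟨P, hP, rfl⟩
      rw [smul_mul_assoc, one_mul, trace_smul, proj_trace hP, smul_eq_mul,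
        div_mul_cancel₀ _ hk0]
    · rintro rfl
      refine ⟨_, hS₀ ▸ diagProj S₀, ?_⟩
      rw [smul_mul_assoc, one_mul, trace_smul, proj_trace (hS₀ ▸ diagProj S₀), smul_eq_mul,
        div_mul_cancel₀ _ hk0]
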